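/- For every k ≥ 4 there exists a nonnegative homogeneous polynomial p in k variables such that x₁²x₂²⋯x_k² divides p, p is not a sum of squares of polynomials, and (1,0,…,0) is a bad point for p, i.e., every polynomial q with q²p a sum of squares of polynomials vanishes at (1,0,…,0). In particular, p := x₁²x₂²⋯x_k² · (x₂⁴x₃² + x₃⁴x₄² + x₄⁴x₂² − 3x₂²x₃²x₄²) has these properties. -/

import Mathlib

open MvPolynomial

/-- A polynomial is a sum of squares of polynomials. -/
def IsSOS {k : ℕ} (p : MvPolynomial (Fin k) ℝ) : Prop :=
  ∃ (m : ℕ) (q : Fin m → MvPolynomial (Fin k) ℝ), p = ∑ i, q i ^ 2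

lemma amgm3 (x y z : ℝ) (hy : 0 ≤ y) (hz : 0 ≤ z) (h1 : y ≤ x) (h2 : y ≤ z) :
    3*(x*y*z) ≤ x^2*y + y^2*z + z^2*x := by
  nlinarith [mul_nonneg hy (sq_nonneg (x-z)),
    mul_nonneg hz (mul_nonneg (sub_nonneg.2 h1) (sub_nonneg.2 h2))]

lemma amgm3' (x y z : ℝ) (hx : 0 ≤ x) (hy : 0 ≤ y) (hz : 0 ≤ z) :
    3*(x*y*z) ≤ x^2*y + y^2*z + z^2*x := by
  rcases le_total y x with h1|h1
  · rcases le_total y z with h2|h2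
    · exact amgm3 x y z hy hz h1 h2
    · linarith [amgm3 y z x hz hx h2 (h2.trans h1)]
  · rcases le_total x z with h2|h2
    · linarith [amgm3 z x y hx hy h2 h1]
    · linarith [amgm3 y z x hz hx (h2.trans h1) h2]

set_option linter.unusedSectionVars false

namespace SOSAux

variable {k : ℕ}

lemma eval_zero'' (p : MvPolynomial (Fin k) ℝ) : eval 0 p = constantCoeff p := by
  induction p using MvPolynomial.induction_on with
  | C a => simp
  | add p q hp hq => simp [hp, hq]
  | mul_X p i hp => simp [hp]

lemma prod_X_eq (s : Finset (Fin k)) :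
    ∏ j ∈ s, (X j : MvPolynomial (Fin k) ℝ) = monomial (∑ j ∈ s, Finsupp.single j 1) 1 := by
  classical
  induction s using Finset.induction with
  | empty => simp
  | @insert j s hj ih =>
      rw [Finset.prod_insert hj, Finset.sum_insert hj, ih, X, monomial_mul, one_mul]

noncomputable def Wt (w : Fin k → ℤ) (m : Fin k →₀ ℕ) : ℤ := ∑ j, w j * (m j : ℤ)

lemma Wt_add (w : Fin k → ℤ) (a b : Fin k →₀ ℕ) : Wt w (a+b) = Wt w a + Wt w b := by
  simp [Wt, mul_add, Finset.sum_add_distrib]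

/-- Key function into a linear order. -/
noncomputable def K (w : Fin k → ℤ) (m : Fin k →₀ ℕ) : Lex (ℤ × Lex (Fin k →₀ ℕ)) :=
  toLex (Wt w m, toLex m)

lemma key {w : Fin k → ℤ} {x y m : Fin k →₀ ℕ}
    (hx : K w x ≤ K w m) (hy : K w y ≤ K w m) (hxy : x + y = m + m) : x = m := by
  rw [K, K, Prod.Lex.le_iff] at hx hy
  have hW : Wt w x + Wt w y = Wt w m + Wt w m := by rw [← Wt_add, ← Wt_add, hxy]
  simp only [ofLex_toLex] at hx hy
  have hx' : Wt w x = Wt w m := by rcases hx with h | h; · rcases hy with h' | h' <;> omega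
                                   · exact h.1
  have hy' : Wt w y = Wt w m := by omega
  have hlx : toLex x ≤ toLex m := by
    rcases hx with h | h; exacts [absurd hx' (by omega), h.2]
  have hly : toLex y ≤ toLex m := by
    rcases hy with h | h; exacts [absurd hy' (by omega), h.2]
  by_contra hne
  have h1 : toLex x < toLex m := lt_of_le_of_ne hlx (by simpa using hne)
  have h2 : toLex x + toLex y < toLex m + toLex m := add_lt_add_of_lt_of_le h1 hly
  have h3 : toLex (x + y) = toLex x + toLex y := rfl
  rw [hxy] at h3
  exact lt_irrefl _ (h3 ▸ h2)

lemma Wt_le_of_K_le {w : Fin k → ℤ} {x m : Fin k →₀ ℕ} (h : K w x ≤ K w m) :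
    Wt w x ≤ Wt w m := by
  rw [K, K, Prod.Lex.le_iff] at h
  rcases h with h | h
  · exact le_of_lt h
  · exact le_of_eq h.1

/-- sum of squares of reals zero implies each zero -/
lemma real_sos_zero {n : ℕ} {f : Fin n → ℝ} (h : ∑ i, f i ^ 2 = 0) (i : Fin n) : f i = 0 := by
  have := (Finset.sum_eq_zero_iff_of_nonneg (fun j _ => sq_nonneg (f j))).1 h i (Finset.mem_univ i)
  exact pow_eq_zero_iff two_ne_zero |>.1 this

/-- sum of squares of polynomials zero implies each zero -/
lemma poly_sos_zero {n : ℕ} {f : Fin n → MvPolynomial (Fin k) ℝ}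
    (h : ∑ i, f i ^ 2 = 0) (i : Fin n) : f i = 0 := by
  apply MvPolynomial.funext
  intro v
  have hv : ∑ j, (eval v (f j)) ^ 2 = 0 := by
    have := congrArg (eval v) h
    simpa [eval_pow] using this
  simpa using real_sos_zero hv i

/-- Main Newton-polytope-style bound for SOS decompositions. -/
lemma sos_supp_bound {n : ℕ} {q : Fin n → MvPolynomial (Fin k) ℝ} {M : MvPolynomial (Fin k) ℝ}
    (hM : ∑ i, q i ^ 2 = M) (w : Fin k → ℤ) {i : Fin n} {m : Fin k →₀ ℕ}
    (hm : m ∈ (q i).support) :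
    ∃ d ∈ M.support, 2 * Wt w m ≤ Wt w d := by
  classical
  set T : Finset (Fin k →₀ ℕ) := Finset.univ.biUnion (fun j => (q j).support) with hT
  have hmT : m ∈ T := Finset.mem_biUnion.2 ⟨i, Finset.mem_univ i, hm⟩
  obtain ⟨ms, hmsT, hmax⟩ := T.exists_max_image (K w) ⟨m, hmT⟩
  obtain ⟨is, -, hims⟩ := Finset.mem_biUnion.1 hmsT
  have hcoeff : ∀ j, coeff (ms + ms) (q j ^ 2) = coeff ms (q j) ^ 2 := by
    intro j
    rw [sq, coeff_mul]
    rw [Finset.sum_eq_single_of_mem (ms, ms) (Finset.HasAntidiagonal.mem_antidiagonal.2 rfl)]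
    · exact (sq _).symm
    · rintro ⟨a, b⟩ hab hne
      rw [Finset.HasAntidiagonal.mem_antidiagonal] at hab
      by_contra hz
      have ha : coeff a (q j) ≠ 0 := fun h => hz (by simp [h])
      have hb : coeff b (q j) ≠ 0 := fun h => hz (by simp [h])
      have haT : a ∈ T := Finset.mem_biUnion.2 ⟨j, Finset.mem_univ j, MvPolynomial.mem_support_iff.2 ha⟩
      have hbT : b ∈ T := Finset.mem_biUnion.2 ⟨j, Finset.mem_univ j, MvPolynomial.mem_support_iff.2 hb⟩
      have ha' : a = ms := key (hmax a haT) (hmax b hbT) hab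
      have hb' : b = ms := by
        subst ha'; exact add_left_cancel (by rw [hab])
      exact hne (by rw [ha', hb'])
  have hcoeffM : coeff (ms + ms) M = ∑ j, coeff ms (q j) ^ 2 := by
    rw [← hM]
    simp only [MvPolynomial.coeff_sum]
    exact Finset.sum_congr rfl (fun j _ => hcoeff j)
  have hpos : 0 < ∑ j, coeff ms (q j) ^ 2 := by
    apply Finset.sum_pos' (fun j _ => sq_nonneg _)
    have : coeff ms (q is) ≠ 0 := MvPolynomial.mem_support_iff.1 hims
    exact ⟨is, Finset.mem_univ is, by positivity⟩
  refine ⟨ms + ms, MvPolynomial.mem_support_iff.2 (by rw [hcoeffM]; exact ne_of_gt hpos), ?_⟩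
  rw [Wt_add, two_mul]
  have := Wt_le_of_K_le (hmax m hmT)
  omega


lemma deg_add (a b : Fin k →₀ ℕ) : (a+b).degree = a.degree + b.degree := by
  simp only [Finsupp.degree_eq_weight_one]
  exact map_add _ a b

lemma deg_of_homog {f : MvPolynomial (Fin k) ℝ} {D : ℕ} (hf : f.IsHomogeneous D)
    {m : Fin k →₀ ℕ} (hm : m ∈ f.support) : m.degree = D := by
  by_contra h
  exact MvPolynomial.mem_support_iff.1 hm (hf.coeff_eq_zero h)

lemma supp_deg_ge_mul {f g : MvPolynomial (Fin k) ℝ} {d e : ℕ}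
    (hf : ∀ m ∈ f.support, d ≤ m.degree) (hg : ∀ m ∈ g.support, e ≤ m.degree) :
    ∀ m ∈ (f*g).support, d + e ≤ m.degree := by
  intro m hm
  obtain ⟨a, ha, b, hb, rfl⟩ := Finset.mem_add.1 (support_mul f g hm)
  rw [deg_add]
  exact add_le_add (hf a ha) (hg b hb)

lemma comp_sq {f : MvPolynomial (Fin k) ℝ} {d : ℕ} (hf : ∀ m ∈ f.support, d ≤ m.degree) :
    homogeneousComponent (d+d) (f^2) = (homogeneousComponent d f)^2 := by
  ext n
  rw [coeff_homogeneousComponent, sq, sq, coeff_mul, coeff_mul]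
  by_cases hn : n.degree = d + d
  · rw [if_pos hn]
    apply Finset.sum_congr rfl
    rintro ⟨a, b⟩ hab
    rw [Finset.HasAntidiagonal.mem_antidiagonal] at hab
    simp only [coeff_homogeneousComponent]
    by_cases ha : coeff a f = 0
    · simp [ha]
    by_cases hb : coeff b f = 0
    · simp [hb]
    have hda := hf a (MvPolynomial.mem_support_iff.2 ha)
    have hdb := hf b (MvPolynomial.mem_support_iff.2 hb)
    have : a.degree + b.degree = d + d := by rw [← deg_add, hab, hn]
    have h1 : a.degree = d := by omega
    have h2 : b.degree = d := by omega
    rw [if_pos h1, if_pos h2]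
  · rw [if_neg hn]
    symm
    apply Finset.sum_eq_zero
    rintro ⟨a, b⟩ hab
    rw [Finset.HasAntidiagonal.mem_antidiagonal] at hab
    simp only [coeff_homogeneousComponent]
    by_cases h1 : a.degree = d
    · by_cases h2 : b.degree = d
      · exfalso; exact hn (by rw [← hab, deg_add, h1, h2])
      · rw [if_neg h2, mul_zero]
    · rw [if_neg h1, zero_mul]

lemma hc_D_mul {f M : MvPolynomial (Fin k) ℝ} {D : ℕ} (hM : M.IsHomogeneous D) :
    homogeneousComponent D (f * M) = C (constantCoeff f) * M := by
  ext n
  rw [coeff_homogeneousComponent, coeff_C_mul]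
  by_cases hn : n.degree = D
  · rw [if_pos hn, coeff_mul,
      Finset.sum_eq_single_of_mem (0, n) (Finset.HasAntidiagonal.mem_antidiagonal.2 (zero_add n))]
    · rw [MvPolynomial.constantCoeff_eq]
    · rintro ⟨a, b⟩ hab hne
      rw [Finset.HasAntidiagonal.mem_antidiagonal] at hab
      by_contra hz
      have hb : coeff b M ≠ 0 := fun h => hz (by simp [h])
      have hdb : b.degree = D := deg_of_homog hM (MvPolynomial.mem_support_iff.2 hb)
      have : a.degree + b.degree = n.degree := by rw [← deg_add, hab]
      have ha0 : a = 0 := (Finsupp.degree_eq_zero_iff a).1 (by omega)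
      subst ha0
      simp only [zero_add] at hab
      exact hne (by rw [Prod.mk.injEq]; exact ⟨rfl, hab⟩)
  · rw [if_neg hn, hM.coeff_eq_zero hn, mul_zero]

lemma lowstep {M q : MvPolynomial (Fin k) ℝ} {D : ℕ} (hM : M.IsHomogeneous D) (hM0 : M ≠ 0)
    (hq : constantCoeff q ≠ 0) {n : ℕ} {r : Fin n → MvPolynomial (Fin k) ℝ}
    (hr : q ^ 2 * M = ∑ i, r i ^ 2) :
    ∃ s : Fin n → MvPolynomial (Fin k) ℝ, M = ∑ i, s i ^ 2 := by
  classical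
  have hq0 : q ≠ 0 := fun h => hq (by simp [h])
  have hqM : q ^ 2 * M ≠ 0 := mul_ne_zero (pow_ne_zero _ hq0) hM0
  have hex : ∃ i, r i ≠ 0 := by
    by_contra h
    push_neg at h
    exact hqM (by simp [hr, h])
  obtain ⟨i₀, hi₀⟩ := hex
  set T : Finset (Fin k →₀ ℕ) := Finset.univ.biUnion (fun j => (r j).support) with hT
  have hTne : T.Nonempty := by
    obtain ⟨m, hm⟩ := MvPolynomial.support_nonempty.2 hi₀
    exact ⟨m, Finset.mem_biUnion.2 ⟨i₀, Finset.mem_univ _, hm⟩⟩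
  set d : ℕ := (T.image Finsupp.degree).min' (hTne.image _) with hd
  have hdle : ∀ j, ∀ m ∈ (r j).support, d ≤ m.degree := fun j m hm =>
    Finset.min'_le _ _ (Finset.mem_image_of_mem _ (Finset.mem_biUnion.2 ⟨j, Finset.mem_univ _, hm⟩))
  obtain ⟨m₀, hm₀T, hm₀d⟩ := Finset.mem_image.1 ((T.image Finsupp.degree).min'_mem (hTne.image _))
  obtain ⟨j₀, -, hj₀⟩ := Finset.mem_biUnion.1 hm₀T
  have hcne : homogeneousComponent d (r j₀) ≠ 0 := by
    intro h
    have := congrArg (coeff m₀) h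
    rw [coeff_homogeneousComponent, if_pos hm₀d] at this
    exact MvPolynomial.mem_support_iff.1 hj₀ (by simpa using this)
  have hsum : homogeneousComponent (d+d) (∑ i, r i ^ 2)
      = ∑ i, (homogeneousComponent d (r i)) ^ 2 := by
    rw [map_sum]
    exact Finset.sum_congr rfl (fun j _ => comp_sq (hdle j))
  have hSne : ∑ i, (homogeneousComponent d (r i)) ^ 2 ≠ 0 :=
    fun h => hcne (poly_sos_zero h j₀)
  have hD : ∀ m ∈ (q ^ 2 * M).support, D ≤ m.degree := by
    intro m hm
    obtain ⟨a, ha, b, hb, rfl⟩ := Finset.mem_add.1 (support_mul _ _ hm)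
    rw [deg_add, deg_of_homog hM hb]
    omega
  have hle1 : ¬ (d + d < D) := by
    intro hlt
    apply hSne
    rw [← hsum, ← hr]
    exact homogeneousComponent_eq_zero' _ _ (fun m hm => by have := hD m hm; omega)
  have hCM : C (constantCoeff q ^ 2) * M ≠ 0 := by
    apply mul_ne_zero _ hM0
    rw [Ne, MvPolynomial.C_eq_zero]
    exact pow_ne_zero _ hq
  have hle2 : ¬ (D < d + d) := by
    intro hlt
    have h1 : homogeneousComponent D (q ^ 2 * M) = C (constantCoeff q ^ 2) * M := by
      rw [hc_D_mul hM, map_pow]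
    have h2 : homogeneousComponent D (∑ i, r i ^ 2) = 0 := by
      rw [map_sum]
      apply Finset.sum_eq_zero
      intro j _
      apply homogeneousComponent_eq_zero'
      intro m hm
      have : d + d ≤ m.degree := by
        have := supp_deg_ge_mul (hdle j) (hdle j) m (by rwa [← sq])
        omega
      omega
    rw [hr, h2] at h1
    exact hCM h1.symm
  have hdD : d + d = D := by omega
  have hkey : C (constantCoeff q ^ 2) * M = ∑ i, (homogeneousComponent d (r i)) ^ 2 := by
    rw [← map_pow, ← hc_D_mul hM, hr, ← hdD, hsum]
  refine ⟨fun i => C (constantCoeff q)⁻¹ * homogeneousComponent d (r i), ?_⟩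
  have : ∑ i, (C (constantCoeff q)⁻¹ * homogeneousComponent d (r i)) ^ 2
      = C ((constantCoeff q)⁻¹ ^ 2) * ∑ i, (homogeneousComponent d (r i)) ^ 2 := by
    rw [Finset.mul_sum]
    exact Finset.sum_congr rfl (fun i _ => by rw [mul_pow, map_pow])
  rw [this, ← hkey, ← mul_assoc, ← map_mul]
  rw [show (constantCoeff q)⁻¹ ^ 2 * constantCoeff q ^ 2 = 1 by field_simp]
  rw [map_one, one_mul]

lemma aeval_eq_eval' (v : Fin k → ℝ) (p : MvPolynomial (Fin k) ℝ) : aeval v p = eval v p := by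
  rw [← MvPolynomial.coe_aeval_eq_eval]; rfl

lemma X_dvd_sub_psi (j : Fin k) (p : MvPolynomial (Fin k) ℝ) :
    X j ∣ p - aeval (Function.update X j 0) p := by
  induction p using MvPolynomial.induction_on with
  | C a => simp [aeval_C]
  | add p q hp hq =>
      have : p + q - aeval (Function.update X j 0) (p + q)
          = (p - aeval (Function.update X j 0) p) + (q - aeval (Function.update X j 0) q) := by
        rw [map_add]; ring
      rw [this]; exact dvd_add hp hq
  | mul_X p i hp =>
      rw [map_mul, aeval_X]
      by_cases hij : i = j
      · subst hij
        rw [Function.update_self]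
        rw [mul_zero, sub_zero]
        exact Dvd.dvd.mul_left (dvd_refl (X i)) p
      · rw [Function.update_of_ne hij]
        have : p * X i - aeval (Function.update X j 0) p * X i
            = (p - aeval (Function.update X j 0) p) * X i := by ring
        rw [this]
        exact hp.mul_right _

lemma X_dvd_of_vanish {j : Fin k} {r : MvPolynomial (Fin k) ℝ}
    (h : ∀ v : Fin k → ℝ, v j = 0 → eval v r = 0) : X j ∣ r := by
  have hpsi : aeval (Function.update (X : Fin k → MvPolynomial (Fin k) ℝ) j 0) r = 0 := by
    apply MvPolynomial.funext
    intro v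
    have h1 : eval v (aeval (Function.update X j 0) r)
        = aeval (fun i => aeval v (Function.update (X : Fin k → MvPolynomial (Fin k) ℝ) j 0 i)) r := by
      rw [← aeval_eq_eval' v]
      exact comp_aeval_apply (R := ℝ)
        (f := Function.update (X : Fin k → MvPolynomial (Fin k) ℝ) j 0) (aeval v) r
    have h2 : (fun i => aeval v (Function.update (X : Fin k → MvPolynomial (Fin k) ℝ) j 0 i)) = Function.update v j 0 := by
      funext i
      by_cases hij : i = j
      · subst hij; simp
      · simp [Function.update_of_ne hij, aeval_X]
    rw [h1, h2, aeval_eq_eval', h _ (Function.update_self j 0 v)]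
    simp
  have := X_dvd_sub_psi j r
  rwa [hpsi, sub_zero] at this

lemma supp_pos_of_X_dvd {j : Fin k} {r : MvPolynomial (Fin k) ℝ} (h : X j ∣ r)
    {m : Fin k →₀ ℕ} (hm : m ∈ r.support) : 1 ≤ m j := by
  obtain ⟨t, rfl⟩ := h
  obtain ⟨a, ha, b, hb, rfl⟩ := Finset.mem_add.1 (support_mul _ _ hm)
  rw [support_X] at ha
  rw [Finset.mem_singleton] at ha
  subst ha
  simp

lemma monomial_dvd {d : Fin k →₀ ℕ} {r : MvPolynomial (Fin k) ℝ}
    (h : ∀ m ∈ r.support, d ≤ m) : monomial d (1:ℝ) ∣ r := by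
  refine ⟨∑ m ∈ r.support, monomial (m - d) (coeff m r), ?_⟩
  conv_lhs => rw [r.as_sum]
  rw [Finset.mul_sum]
  apply Finset.sum_congr rfl
  intro m hm
  rw [monomial_mul, one_mul, add_tsub_cancel_of_le (h m hm)]


section Concrete
variable {a b c : Fin k} (hab : a ≠ b) (hbc : b ≠ c) (hac : a ≠ c)

/-- the exponent finsupp with value x at a, y at b, z at c -/
noncomputable def F (a b c : Fin k) (x y z : ℕ) : Fin k →₀ ℕ :=
  Finsupp.single a x + Finsupp.single b y + Finsupp.single c z

/-- the Motzkin-like form -/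
noncomputable def Mp (a b c : Fin k) : MvPolynomial (Fin k) ℝ :=
  X a ^ 4 * X b ^ 2 + X b ^ 4 * X c ^ 2 + X c ^ 4 * X a ^ 2 -
    3 * (X a ^ 2 * X b ^ 2 * X c ^ 2)

include hab hac in
lemma Fapp_a (x y z : ℕ) : F a b c x y z a = x := by
  simp [F, Finsupp.single_apply, Ne.symm hab, Ne.symm hac]

include hab hbc in
lemma Fapp_b (x y z : ℕ) : F a b c x y z b = y := by
  simp [F, Finsupp.single_apply, hab, Ne.symm hbc]

include hac hbc in
lemma Fapp_c (x y z : ℕ) : F a b c x y z c = z := by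
  simp [F, Finsupp.single_apply, hac, hbc]

lemma Fapp_out (x y z : ℕ) {j : Fin k} (hja : j ≠ a) (hjb : j ≠ b) (hjc : j ≠ c) :
    F a b c x y z j = 0 := by
  simp [F, Finsupp.single_apply, Ne.symm hja, Ne.symm hjb, Ne.symm hjc]

lemma F_add (x y z x' y' z' : ℕ) :
    F a b c x y z + F a b c x' y' z' = F a b c (x+x') (y+y') (z+z') := by
  ext j
  simp only [F, Finsupp.add_apply, Finsupp.single_apply]
  split_ifs <;> omega

include hab hbc hac in
lemma F_eq_iff {x y z x' y' z' : ℕ} :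
    F a b c x y z = F a b c x' y' z' ↔ (x = x' ∧ y = y' ∧ z = z') := by
  constructor
  · intro h
    refine ⟨?_, ?_, ?_⟩
    · have := congrArg (fun f => f a) h; simpa [Fapp_a hab hac] using this
    · have := congrArg (fun f => f b) h; simpa [Fapp_b hab hbc] using this
    · have := congrArg (fun f => f c) h; simpa [Fapp_c hbc hac] using this
  · rintro ⟨rfl, rfl, rfl⟩; rfl

lemma Mrepr : Mp a b c =
    monomial (F a b c 4 2 0) 1 + monomial (F a b c 0 4 2) 1 + monomial (F a b c 2 0 4) 1 +
      monomial (F a b c 2 2 2) (-3 : ℝ) := by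
  have e1 : (X a ^ 4 * X b ^ 2 : MvPolynomial (Fin k) ℝ) = monomial (F a b c 4 2 0) 1 := by
    rw [X_pow_eq_monomial, X_pow_eq_monomial, monomial_mul, one_mul]
    congr 1
    simp [F]
  have e2 : (X b ^ 4 * X c ^ 2 : MvPolynomial (Fin k) ℝ) = monomial (F a b c 0 4 2) 1 := by
    rw [X_pow_eq_monomial, X_pow_eq_monomial, monomial_mul, one_mul]
    congr 1
    simp [F, add_comm]
  have e3 : (X c ^ 4 * X a ^ 2 : MvPolynomial (Fin k) ℝ) = monomial (F a b c 2 0 4) 1 := by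
    rw [X_pow_eq_monomial, X_pow_eq_monomial, monomial_mul, one_mul]
    congr 1
    simp [F, add_comm]
  have e4 : (3 * (X a ^ 2 * X b ^ 2 * X c ^ 2) : MvPolynomial (Fin k) ℝ)
      = monomial (F a b c 2 2 2) 3 := by
    rw [X_pow_eq_monomial, X_pow_eq_monomial, X_pow_eq_monomial, monomial_mul, monomial_mul]
    have h3C : (3 : MvPolynomial (Fin k) ℝ) = C 3 := (map_ofNat (C : ℝ →+* MvPolynomial (Fin k) ℝ) 3).symm
    rw [h3C, C_mul_monomial]
    norm_num [F]
  rw [Mp, e1, e2, e3, e4, sub_eq_add_neg, ← map_neg]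

include hab hbc hac in
lemma suppM : (Mp a b c).support ⊆
    {F a b c 4 2 0, F a b c 0 4 2, F a b c 2 0 4, F a b c 2 2 2} := by
  intro m hm
  rw [MvPolynomial.mem_support_iff, Mrepr] at hm
  by_contra hmem
  simp only [Finset.mem_insert, Finset.mem_singleton, not_or] at hmem
  obtain ⟨h1, h2, h3, h4⟩ := hmem
  rw [coeff_add, coeff_add, coeff_add, coeff_monomial, coeff_monomial, coeff_monomial,
    coeff_monomial, if_neg (fun h => h1 h.symm), if_neg (fun h => h2 h.symm),
    if_neg (fun h => h3 h.symm), if_neg (fun h => h4 h.symm)] at hm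
  simp at hm

include hab hbc hac in
lemma coeff_mu : coeff (F a b c 2 2 2) (Mp a b c) = -3 := by
  rw [Mrepr]
  simp only [coeff_add, coeff_monomial]
  rw [if_neg (fun h => by rw [F_eq_iff hab hbc hac] at h; omega),
    if_neg (fun h => by rw [F_eq_iff hab hbc hac] at h; omega),
    if_neg (fun h => by rw [F_eq_iff hab hbc hac] at h; omega)]
  simp

lemma deg_single' (j : Fin k) (n : ℕ) : (Finsupp.single j n).degree = n := by
  rcases eq_or_ne n 0 with h | h
  · simp [h, Finsupp.degree]
  · rw [Finsupp.degree_single]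

include hab hbc hac in
lemma degF (x y z : ℕ) : (F a b c x y z).degree = x + y + z := by
  rw [F, deg_add, deg_add, deg_single', deg_single', deg_single']

include hab hbc hac in
lemma Mhomog : (Mp a b c).IsHomogeneous 6 := by
  rw [Mrepr]
  refine (((isHomogeneous_monomial _ ?_).add (isHomogeneous_monomial _ ?_)).add
    (isHomogeneous_monomial _ ?_)).add (isHomogeneous_monomial _ ?_) <;>
    rw [degF hab hbc hac]

include hab hbc hac in
lemma Mne : Mp a b c ≠ 0 := fun h => by
  have := coeff_mu hab hbc hac
  rw [h, coeff_zero] at this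
  norm_num at this

include hab hbc hac in
lemma Wt_ite (A B C : ℤ) (m : Fin k →₀ ℕ) :
    Wt (fun j => if j = a then A else if j = b then B else if j = c then C else 0) m
      = A * m a + B * m b + C * m c := by
  rw [Wt, ← Finset.sum_subset (Finset.subset_univ ({a, b, c} : Finset (Fin k)))]
  · rw [Finset.sum_insert (by simp [hab, hac]), Finset.sum_insert (by simp [hbc]),
      Finset.sum_singleton]
    rw [if_pos rfl, if_neg (Ne.symm hab), if_pos rfl, if_neg (Ne.symm hac),
      if_neg (Ne.symm hbc), if_pos rfl]
    ring
  · intro j _ hj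
    simp only [Finset.mem_insert, Finset.mem_singleton, not_or] at hj
    rw [if_neg hj.1, if_neg hj.2.1, if_neg hj.2.2, zero_mul]

lemma Wt_single (j0 : Fin k) (m : Fin k →₀ ℕ) :
    Wt (fun j => if j = j0 then 1 else 0) m = m j0 := by
  rw [Wt, ← Finset.sum_subset (Finset.subset_univ ({j0} : Finset (Fin k)))]
  · rw [Finset.sum_singleton, if_pos rfl, one_mul]
  · intro j _ hj
    rw [Finset.mem_singleton] at hj
    rw [if_neg hj, zero_mul]

lemma sos_coeff_sq {q : MvPolynomial (Fin k) ℝ} {S : Finset (Fin k →₀ ℕ)}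
    (hs : q.support ⊆ S) {μ ν : Fin k →₀ ℕ} (hν : ν + ν = μ)
    (huniq : ∀ u ∈ S, ∀ v ∈ S, u + v = μ → u = ν) :
    coeff μ (q ^ 2) = coeff ν q ^ 2 := by
  rw [sq, coeff_mul, Finset.sum_eq_single_of_mem (ν, ν) (Finset.HasAntidiagonal.mem_antidiagonal.2 hν)]
  · exact (sq _).symm
  · rintro ⟨u, v⟩ huv hne
    rw [Finset.HasAntidiagonal.mem_antidiagonal] at huv
    by_contra hz
    have hu : coeff u q ≠ 0 := fun h => hz (by simp [h])
    have hv : coeff v q ≠ 0 := fun h => hz (by simp [h])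
    have huS : u ∈ S := hs (MvPolynomial.mem_support_iff.2 hu)
    have hvS : v ∈ S := hs (MvPolynomial.mem_support_iff.2 hv)
    have hu' : u = ν := huniq u huS v hvS huv
    have hv' : v = ν := by
      subst hu'
      exact add_left_cancel (by rw [huv, hν])
    exact hne (by rw [hu', hv'])

set_option maxHeartbeats 1000000 in
include hab hbc hac in
theorem Mp_not_SOS : ¬ IsSOS (Mp a b c) := by
  rintro ⟨n, q, hq⟩
  have hM : ∑ i, q i ^ 2 = Mp a b c := hq.symm
  -- characterize supports
  have supp_char : ∀ i, ∀ m ∈ (q i).support,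
      m = F a b c 2 1 0 ∨ m = F a b c 0 2 1 ∨ m = F a b c 1 0 2 ∨ m = F a b c 1 1 1 := by
    intro i m hm
    have key : ∀ A B C : ℤ,
        2 * (A * m a + B * m b + C * m c) ≤ 4*A+2*B ∨
        2 * (A * m a + B * m b + C * m c) ≤ 4*B+2*C ∨
        2 * (A * m a + B * m b + C * m c) ≤ 2*A+4*C ∨
        2 * (A * m a + B * m b + C * m c) ≤ 2*A+2*B+2*C := by
      intro A B C
      obtain ⟨d, hd, hle⟩ := sos_supp_bound hM
        (fun j => if j = a then A else if j = b then B else if j = c then C else 0) hm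
      rw [Wt_ite hab hbc hac] at hle
      have hd4 := suppM hab hbc hac hd
      simp only [Finset.mem_insert, Finset.mem_singleton] at hd4
      rcases hd4 with rfl | rfl | rfl | rfl <;>
        rw [Wt_ite hab hbc hac] at hle <;>
        rw [Fapp_a hab hac, Fapp_b hab hbc, Fapp_c hbc hac] at hle <;>
        push_cast at hle ⊢ <;> omega
    have hout : ∀ j, j ≠ a → j ≠ b → j ≠ c → m j = 0 := by
      intro j hja hjb hjc
      obtain ⟨d, hd, hle⟩ := sos_supp_bound hM (fun j' => if j' = j then 1 else 0) hm
      rw [Wt_single] at hle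
      have hd4 := suppM hab hbc hac hd
      simp only [Finset.mem_insert, Finset.mem_singleton] at hd4
      rcases hd4 with rfl | rfl | rfl | rfl <;>
        rw [Wt_single, Fapp_out _ _ _ hja hjb hjc] at hle <;> omega
    have hmeq : m = F a b c (m a) (m b) (m c) := by
      ext j
      by_cases hja : j = a
      · subst hja; rw [Fapp_a hab hac]
      by_cases hjb : j = b
      · subst hjb; rw [Fapp_b hab hbc]
      by_cases hjc : j = c
      · subst hjc; rw [Fapp_c hbc hac]
      rw [Fapp_out _ _ _ hja hjb hjc, hout j hja hjb hjc]
    have b1 : (m a : ℤ) + m b + m c ≤ 3 := by have := key 1 1 1; omega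
    have b2 : 3 ≤ (m a : ℤ) + m b + m c := by have := key (-1) (-1) (-1); omega
    have b3 : (m a : ℤ) - 2 * m b ≤ 1 := by have := key 1 (-2) 0; omega
    have b4 : (m b : ℤ) - 2 * m c ≤ 1 := by have := key 0 1 (-2); omega
    have b5 : (m c : ℤ) - 2 * m a ≤ 1 := by have := key (-2) 0 1; omega
    have : (m a = 2 ∧ m b = 1 ∧ m c = 0) ∨ (m a = 0 ∧ m b = 2 ∧ m c = 1) ∨
        (m a = 1 ∧ m b = 0 ∧ m c = 2) ∨ (m a = 1 ∧ m b = 1 ∧ m c = 1) := by omega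
    rcases this with ⟨h1, h2, h3⟩ | ⟨h1, h2, h3⟩ | ⟨h1, h2, h3⟩ | ⟨h1, h2, h3⟩ <;>
      rw [h1, h2, h3] at hmeq
    · exact Or.inl hmeq
    · exact Or.inr (Or.inl hmeq)
    · exact Or.inr (Or.inr (Or.inl hmeq))
    · exact Or.inr (Or.inr (Or.inr hmeq))
  -- now compute the coefficient of F 2 2 2
  classical
  set S : Finset (Fin k →₀ ℕ) :=
    {F a b c 2 1 0, F a b c 0 2 1, F a b c 1 0 2, F a b c 1 1 1} with hS
  have hsupp : ∀ i, (q i).support ⊆ S := by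
    intro i m hm
    rcases supp_char i m hm with h | h | h | h <;> simp [hS, h]
  have huniq : ∀ u ∈ S, ∀ v ∈ S, u + v = F a b c 2 2 2 → u = F a b c 1 1 1 := by
    intro u hu v hv huv
    simp only [hS, Finset.mem_insert, Finset.mem_singleton] at hu hv
    rcases hu with rfl | rfl | rfl | rfl <;> rcases hv with rfl | rfl | rfl | rfl <;>
      rw [F_add] at huv <;> rw [F_eq_iff hab hbc hac] at huv ⊢ <;> omega
  have hcoeff : coeff (F a b c 2 2 2) (Mp a b c) = ∑ i, coeff (F a b c 1 1 1) (q i) ^ 2 := by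
    rw [← hM, MvPolynomial.coeff_sum]
    exact Finset.sum_congr rfl (fun i _ =>
      sos_coeff_sq (hsupp i) (by rw [F_add]) huniq)
  rw [coeff_mu hab hbc hac] at hcoeff
  have hnn : (0:ℝ) ≤ ∑ i, coeff (F a b c 1 1 1) (q i) ^ 2 :=
    Finset.sum_nonneg (fun i _ => sq_nonneg _)
  linarith

end Concrete
end SOSAux

open SOSAux in
set_option maxHeartbeats 1000000 in
theorem stmt6 (k : ℕ) (hk : 4 ≤ k) :
    ∃ p : MvPolynomial (Fin k) ℝ,
      p = (∏ i, X i ^ 2) *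
          (X (⟨1, by omega⟩ : Fin k) ^ 4 * X (⟨2, by omega⟩ : Fin k) ^ 2 +
           X (⟨2, by omega⟩ : Fin k) ^ 4 * X (⟨3, by omega⟩ : Fin k) ^ 2 +
           X (⟨3, by omega⟩ : Fin k) ^ 4 * X (⟨1, by omega⟩ : Fin k) ^ 2 -
           3 * (X (⟨1, by omega⟩ : Fin k) ^ 2 * X (⟨2, by omega⟩ : Fin k) ^ 2 *
                X (⟨3, by omega⟩ : Fin k) ^ 2)) ∧
      (∀ v : Fin k → ℝ, 0 ≤ eval v p) ∧
      p.IsHomogeneous (2 * k + 6) ∧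
      (∏ i, X i ^ 2) ∣ p ∧
      ¬ IsSOS p ∧
      -- (1,0,…,0) is a bad point for p
      (∀ q : MvPolynomial (Fin k) ℝ, IsSOS (q ^ 2 * p) →
        eval (fun i : Fin k => if i.val = 0 then (1 : ℝ) else 0) q = 0) := by
  classical
  set i0 : Fin k := ⟨0, by omega⟩ with hi0
  set a : Fin k := ⟨1, by omega⟩ with ha
  set b : Fin k := ⟨2, by omega⟩ with hb
  set c : Fin k := ⟨3, by omega⟩ with hc
  have hab : a ≠ b := by simp [ha, hb, Fin.ext_iff]
  have hbc : b ≠ c := by simp [hb, hc, Fin.ext_iff]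
  have hac : a ≠ c := by simp [ha, hc, Fin.ext_iff]
  have ha0 : a ≠ i0 := by simp [ha, hi0, Fin.ext_iff]
  have hb0 : b ≠ i0 := by simp [hb, hi0, Fin.ext_iff]
  have hc0 : c ≠ i0 := by simp [hc, hi0, Fin.ext_iff]
  -- the bad point property
  have hbad : ∀ q : MvPolynomial (Fin k) ℝ, IsSOS (q ^ 2 * ((∏ i, X i ^ 2) * Mp a b c)) →
      eval (fun i : Fin k => if i.val = 0 then (1 : ℝ) else 0) q = 0 := by
    rintro q ⟨n, r, hr⟩
    set φ : MvPolynomial (Fin k) ℝ →ₐ[ℝ] MvPolynomial (Fin k) ℝ :=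
      aeval (fun i => if i = i0 then 1 else X i) with hφ
    have hφX : ∀ j : Fin k, j ≠ i0 → φ (X j) = X j := fun j hj => by
      simp [hφ, aeval_X, hj]
    have hφX0 : φ (X i0) = 1 := by simp [hφ]
    have hφM : φ (Mp a b c) = Mp a b c := by
      rw [Mp]
      simp only [map_sub, map_add, map_mul, map_pow, map_ofNat,
        hφX a ha0, hφX b hb0, hφX c hc0]
    set s : Finset (Fin k) := Finset.univ.erase i0 with hs
    set e : Fin k →₀ ℕ := ∑ j ∈ s, Finsupp.single j 1 with he
    set G : MvPolynomial (Fin k) ℝ := monomial e 1 with hG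
    have hej : ∀ j : Fin k, e j = if j ∈ s then 1 else 0 := by
      intro j
      rw [he, Finsupp.finset_sum_apply]
      rw [show (∑ j' ∈ s, Finsupp.single j' (1:ℕ) j) = ∑ j' ∈ s, if j' = j then 1 else 0 from
        Finset.sum_congr rfl (fun j' _ => by rw [Finsupp.single_apply]), Finset.sum_ite_eq']
    have hφprod : φ (∏ i, X i ^ 2) = G ^ 2 := by
      rw [map_prod, ← Finset.mul_prod_erase Finset.univ _ (Finset.mem_univ i0),
        map_pow, hφX0, one_pow, one_mul]
      rw [Finset.prod_congr rfl (fun j hj => by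
        rw [map_pow, hφX j (Finset.ne_of_mem_erase hj)]), Finset.prod_pow, ← hs,
        prod_X_eq, ← he, ← hG]
    have hr' : φ q ^ 2 * (G ^ 2 * Mp a b c) = ∑ i, φ (r i) ^ 2 := by
      have h := congrArg φ hr
      simp only [map_mul, map_pow, map_sum] at h
      rwa [hφprod, hφM] at h
    -- each φ (r i) is divisible by G
    have hdvd : ∀ i, G ∣ φ (r i) := by
      intro i
      rw [hG]
      apply monomial_dvd
      intro m hm
      rw [Finsupp.le_def]
      intro j
      rw [hej j]
      by_cases hj : j ∈ s
      · rw [if_pos hj]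
        refine supp_pos_of_X_dvd ?_ hm
        apply X_dvd_of_vanish
        intro v hv
        have hvG : eval v G = 0 := by
          rw [hG, eval_monomial, one_mul]
          apply Finset.prod_eq_zero (i := j)
          · rw [Finsupp.mem_support_iff, hej j, if_pos hj]; norm_num
          · show v j ^ e j = 0
            rw [hej j, if_pos hj, pow_one, hv]
        have h0 : ∑ i', (eval v (φ (r i'))) ^ 2 = 0 := by
          have := congrArg (eval v) hr'
          simp only [map_mul, map_pow, map_sum] at this
          rw [hvG] at this
          rw [← this]
          ring
        exact real_sos_zero h0 i
      · rw [if_neg hj]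
        exact Nat.zero_le _
    choose u hu using hdvd
    have hG2 : G ^ 2 ≠ 0 := by
      apply pow_ne_zero
      rw [hG, Ne, monomial_eq_zero]
      norm_num
    have hcancel : φ q ^ 2 * Mp a b c = ∑ i, u i ^ 2 := by
      apply mul_left_cancel₀ hG2
      calc G ^ 2 * (φ q ^ 2 * Mp a b c) = φ q ^ 2 * (G ^ 2 * Mp a b c) := by ring
        _ = ∑ i, φ (r i) ^ 2 := hr'
        _ = ∑ i, (G * u i) ^ 2 := by
            exact Finset.sum_congr rfl (fun i _ => by rw [hu i])
        _ = G ^ 2 * ∑ i, u i ^ 2 := by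
            rw [Finset.mul_sum]
            exact Finset.sum_congr rfl (fun i _ => by ring)
    have heval : eval (fun i : Fin k => if i.val = 0 then (1 : ℝ) else 0) q
        = constantCoeff (φ q) := by
      have h1 : eval (0 : Fin k → ℝ) (φ q) = aeval (R := ℝ)
          (fun i => aeval (0 : Fin k → ℝ)
            ((fun i' : Fin k => if i' = i0 then (1 : MvPolynomial (Fin k) ℝ) else X i') i)) q := by
        rw [hφ, ← aeval_eq_eval']
        exact comp_aeval_apply (R := ℝ)
          (f := fun i' : Fin k => if i' = i0 then (1 : MvPolynomial (Fin k) ℝ) else X i')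
          (aeval (0 : Fin k → ℝ)) q
      have hfun : (fun i : Fin k => aeval (0 : Fin k → ℝ)
          ((fun i' : Fin k => if i' = i0 then (1 : MvPolynomial (Fin k) ℝ) else X i') i))
          = (fun i : Fin k => if i.val = 0 then (1 : ℝ) else 0) := by
        funext i
        by_cases hi : i = i0
        · rw [hi]
          simp [hi0]
        · have hv2 : ¬ ((i : ℕ) = 0) := fun h => hi (by rw [hi0]; exact Fin.ext h)
          simp [hi, hv2]
      rw [← eval_zero'' (φ q), h1, hfun, aeval_eq_eval']
    rw [heval]
    by_contra hne
    exact Mp_not_SOS hab hbc hac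
      ⟨n, _, (lowstep (Mhomog hab hbc hac) (Mne hab hbc hac) hne hcancel).choose_spec⟩
  refine ⟨(∏ i, X i ^ 2) * Mp a b c, rfl, ?_, ?_, dvd_mul_right _ _, ?_, hbad⟩
  · -- nonnegativity
    intro v
    rw [eval_mul]
    apply mul_nonneg
    · rw [map_prod]
      apply Finset.prod_nonneg
      intro i _
      rw [map_pow, eval_X]
      positivity
    · rw [Mp]
      simp only [map_sub, map_add, map_mul, map_pow, eval_X, map_ofNat]
      nlinarith [amgm3' ((v a)^2) ((v b)^2) ((v c)^2) (sq_nonneg _) (sq_nonneg _) (sq_nonneg _)]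
  · -- homogeneity
    have h1 : (∏ i : Fin k, (X i : MvPolynomial (Fin k) ℝ) ^ 2).IsHomogeneous (2 * k) := by
      have h2 := MvPolynomial.IsHomogeneous.prod Finset.univ
        (fun i => (X i : MvPolynomial (Fin k) ℝ) ^ 2) (fun _ => 2)
        (fun i _ => (isHomogeneous_X ℝ i).pow 2)
      have e : (∑ _i : Fin k, 2) = 2 * k := by
        simp [Finset.sum_const, Finset.card_univ, mul_comm]
      rwa [e] at h2
    exact h1.mul (Mhomog hab hbc hac)
  · -- not SOS
    intro hs
    have h1 := hbad 1 (by simpa using hs)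
    simp at h1
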